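/- Let a, b > 0, and let sequences u^k, v^k ∈ ℝ^{n×p} (k ≥ 0) and a point (u*, v*) ∈ ℝ^{n×p} × ℝ^{n×p} satisfy, for all k ≥ 0, b‖u^{k+1} − u*‖_F² + a‖v^{k+1} − v*‖_F² ≤ b‖u^k − u*‖_F² − b‖u^k − u^{k+1}‖_F² − b‖v^k − v*‖_F² + b‖v^k − v^{k+1}‖_F². Then for any ρ > 0 and any t ∈ (0,1) such that a(1−t)/ρ − b ≤ a·t and a(1−t)/(1+ρ) − b > 0, the sequence { b‖u^k − u*‖_F² + a·t‖v^k − v*‖_F² } is monotonically non-increasing in k, and Σ_{k=0}^∞ [ b‖u^k − u^{k+1}‖_F² + (a(1−t)/(1+ρ) − b)‖v^k − v^{k+1}‖_F² ] < ∞. -/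

import Mathlib

open Matrix

noncomputable section

/-- Squared Frobenius norm. -/
def frobSq {m p : ℕ} (A : Matrix (Fin m) (Fin p) ℝ) : ℝ := ∑ i, ∑ j, (A i j) ^ 2

lemma frobSq_nonneg {m p : ℕ} (A : Matrix (Fin m) (Fin p) ℝ) : 0 ≤ frobSq A := by
  apply Finset.sum_nonneg; intro i _
  exact Finset.sum_nonneg fun j _ => sq_nonneg _

lemma frobSq_peter_paul {m p : ℕ} (ρ : ℝ) (hρ : 0 < ρ)
    (X Y Z : Matrix (Fin m) (Fin p) ℝ) :
    frobSq (X - Y) ≤ (1 + 1/ρ) * frobSq (X - Z) + (1 + ρ) * frobSq (Y - Z) := by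
  unfold frobSq
  rw [Finset.mul_sum, Finset.mul_sum, ← Finset.sum_add_distrib]
  apply Finset.sum_le_sum; intro i _
  rw [Finset.mul_sum, Finset.mul_sum, ← Finset.sum_add_distrib]
  apply Finset.sum_le_sum; intro j _
  simp only [Matrix.sub_apply]
  set s := X i j - Z i j
  set r := Y i j - Z i j
  have hxy : X i j - Y i j = s - r := by ring
  rw [hxy, ← mul_le_mul_iff_right₀ hρ]
  have e : ρ * ((1 + 1/ρ) * s^2 + (1 + ρ) * r^2) = (ρ + 1) * s^2 + ρ * (1 + ρ) * r^2 := by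
    field_simp
  rw [e]
  nlinarith [sq_nonneg (s + ρ * r)]

/-- Lemma on contraction of coupled sequences (Lemma 5 / `contraction_lemma`). -/
theorem stmt_11 (n p : ℕ) (hn : 1 ≤ n) (hp : 1 ≤ p) (a b : ℝ) (ha : 0 < a) (hb : 0 < b)
    (u v : ℕ → Matrix (Fin n) (Fin p) ℝ)
    (us vs : Matrix (Fin n) (Fin p) ℝ)
    (hrec : ∀ k : ℕ,
      b * frobSq (u (k + 1) - us) + a * frobSq (v (k + 1) - vs) ≤
        b * frobSq (u k - us) - b * frobSq (u k - u (k + 1))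
          - b * frobSq (v k - vs) + b * frobSq (v k - v (k + 1)))
    (ρ t : ℝ) (hρ : 0 < ρ) (ht0 : 0 < t) (ht1 : t < 1)
    (hcond1 : a * (1 - t) / ρ - b ≤ a * t)
    (hcond2 : a * (1 - t) / (1 + ρ) - b > 0) :
    (∀ k : ℕ,
      b * frobSq (u (k + 1) - us) + a * t * frobSq (v (k + 1) - vs) ≤
        b * frobSq (u k - us) + a * t * frobSq (v k - vs)) ∧
    Summable (fun k : ℕ =>
      b * frobSq (u k - u (k + 1)) +
        (a * (1 - t) / (1 + ρ) - b) * frobSq (v k - v (k + 1))) := by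
  set E : ℕ → ℝ := fun k => b * frobSq (u k - us) + a * t * frobSq (v k - vs) with hE
  set c : ℕ → ℝ := fun k => b * frobSq (u k - u (k + 1)) +
        (a * (1 - t) / (1 + ρ)- b) * frobSq (v k - v (k + 1)) with hc
  have hρ1 : (0:ℝ) < 1 + ρ := by linarith
  have hat : 0 < a * (1 - t) := by nlinarith
  have hkey : ∀ k, E (k + 1) + c k ≤ E k := by
    intro k
    have h1 := hrec k
    have h2 := frobSq_peter_paul ρ hρ (v k) (v (k+1)) vs
    have h3 := frobSq_nonneg (v k - vs)
    have h4 := frobSq_nonneg (v (k+1) - vs)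
    have h5 := frobSq_nonneg (v k - v (k+1))
    simp only [hE, hc]
    -- coefficient computations
    have e1 : (a * (1 - t) / (1 + ρ)) * (1 + 1/ρ) = a * (1 - t) / ρ := by
      field_simp; ring
    have e2 : (a * (1 - t) / (1 + ρ)) * (1 + ρ) = a * (1 - t) := by
      field_simp
    -- from h2 multiplied by positive coefficient a(1-t)/(1+ρ)
    have hcoef : 0 < a * (1 - t) / (1 + ρ) := div_pos hat hρ1
    have h2' : (a * (1 - t) / (1 + ρ)) * frobSq (v k - v (k+1)) ≤
        (a * (1 - t) / ρ) * frobSq (v k - vs) + (a * (1 - t)) * frobSq (v (k+1) - vs) := by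
      calc (a * (1 - t) / (1 + ρ)) * frobSq (v k - v (k+1))
          ≤ (a * (1 - t) / (1 + ρ)) * ((1 + 1/ρ) * frobSq (v k - vs) + (1 + ρ) * frobSq (v (k+1) - vs)) :=
            mul_le_mul_of_nonneg_left h2 hcoef.le
        _ = (a * (1 - t) / ρ) * frobSq (v k - vs) + (a * (1 - t)) * frobSq (v (k+1) - vs) := by
            rw [mul_add, ← mul_assoc, ← mul_assoc, e1, e2]
    have hc1 : (a * (1 - t) / ρ - b) * frobSq (v k - vs) ≤ a * t * frobSq (v k - vs) :=
      mul_le_mul_of_nonneg_right hcond1 h3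
    nlinarith [h1, h2', hc1]
  have hcnonneg : ∀ k, 0 ≤ c k := fun k =>
    add_nonneg (mul_nonneg hb.le (frobSq_nonneg _))
      (mul_nonneg hcond2.le (frobSq_nonneg _))
  have hEnonneg : ∀ k, 0 ≤ E k := fun k =>
    add_nonneg (mul_nonneg hb.le (frobSq_nonneg _))
      (mul_nonneg (mul_nonneg ha.le ht0.le) (frobSq_nonneg _))
  constructor
  · intro k
    have := hkey k
    have := hcnonneg k
    simp only [hE] at *
    linarith
  · apply summable_of_sum_range_le (c := E 0) hcnonneg
    intro N
    have htel : ∑ k ∈ Finset.range N, (E k - E (k + 1)) = E 0 - E N :=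
      Finset.sum_range_sub' E N
    have hle : ∑ k ∈ Finset.range N, c k ≤ ∑ k ∈ Finset.range N, (E k - E (k + 1)) := by
      apply Finset.sum_le_sum; intro k _
      have := hkey k; linarith
    have := hEnonneg N
    calc ∑ k ∈ Finset.range N, c k ≤ E 0 - E N := by rw [← htel]; exact hle
      _ ≤ E 0 := by linarith
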